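/- Let M be an n×n symmetric negative definite matrix with integer entries such that all off-diagonal entries are nonnegative. If x ∈ ℤ^n satisfies M·x ≤ 0 componentwise, then x ≥ 0 componentwise. -/

import Mathlib

open Matrix


theorem lipman_cone_nonneg {n : ℕ} (M : Matrix (Fin n) (Fin n) ℤ)
    (hsymm : M.IsSymm)
    (hnegdef : (-(M.map (Int.cast : ℤ → ℝ))).PosDef)
    (hoff : ∀ i j, i ≠ j → 0 ≤ M i j)
    (x : Fin n → ℤ) (hx : ∀ i, M.mulVec x i ≤ 0) :
    ∀ i, 0 ≤ x i := by
  set A := M.map (Int.cast : ℤ → ℝ) with hA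
  set u : Fin n → ℝ := fun i => max (-(x i : ℝ)) 0 with hu
  set p : Fin n → ℝ := fun i => max ((x i : ℝ)) 0 with hp
  have hu0 : ∀ i, 0 ≤ u i := fun i => le_max_right _ _
  have hp0 : ∀ i, 0 ≤ p i := fun i => le_max_right _ _
  have hpu : ∀ i, u i = p i - (x i : ℝ) := by
    intro i
    rcases le_total ((x i : ℝ)) 0 with h | h
    · show max (-(x i : ℝ)) 0 = max ((x i : ℝ)) 0 - (x i : ℝ)
      rw [max_eq_right h, max_eq_left (neg_nonneg.mpr h)]; ring
    · show max (-(x i : ℝ)) 0 = max ((x i : ℝ)) 0 - (x i : ℝ)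
      rw [max_eq_left h, max_eq_right (neg_nonpos.mpr h)]; ring
  have hupz : ∀ i, u i * p i = 0 := by
    intro i
    rcases le_total ((x i : ℝ)) 0 with h | h
    · have : p i = 0 := max_eq_right h
      rw [this, mul_zero]
    · have : u i = 0 := max_eq_right (neg_nonpos.mpr h)
      rw [this, zero_mul]
  have hAx : A.mulVec (fun i => (x i : ℝ)) = fun i => ((M.mulVec x i : ℤ) : ℝ) := by
    funext i
    simp [Matrix.mulVec, dotProduct, Matrix.map_apply]
    push_cast
    rfl
  have h2 : u ⬝ᵥ A.mulVec (fun i => (x i : ℝ)) ≤ 0 := by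
    rw [hAx]
    apply Finset.sum_nonpos
    intro i _
    show u i * ((M.mulVec x i : ℤ) : ℝ) ≤ 0
    exact mul_nonpos_of_nonneg_of_nonpos (hu0 i) (by exact_mod_cast hx i)
  have h1 : 0 ≤ u ⬝ᵥ A.mulVec p := by
    simp only [dotProduct, Matrix.mulVec]
    apply Finset.sum_nonneg
    intro i _
    rw [Finset.mul_sum]
    apply Finset.sum_nonneg
    intro j _
    rcases eq_or_ne i j with rfl | hij
    · have : u i * (A i i * p i) = A i i * (u i * p i) := by ring
      rw [this, hupz i, mul_zero]
    · have hM : (0 : ℝ) ≤ A i j := by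
        simp only [hA, Matrix.map_apply]
        exact_mod_cast hoff i j hij
      exact mul_nonneg (hu0 i) (mul_nonneg hM (hp0 j))
  have key : 0 ≤ u ⬝ᵥ A.mulVec u := by
    have huvec : u = p - (fun i => (x i : ℝ)) := by
      funext i; exact hpu i
    rw [huvec, Matrix.mulVec_sub, dotProduct_sub]
    rw [← huvec]
    linarith
  have hzero : u = 0 := by
    by_contra hne
    have := hnegdef.dotProduct_mulVec_pos hne
    simp only [Matrix.neg_mulVec, dotProduct_neg, star_trivial] at this
    have : (0 : ℝ) < -(u ⬝ᵥ A.mulVec u) := by exact_mod_cast this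
    linarith
  intro i
  have : u i = 0 := congrFun hzero i
  have hle : -(x i : ℝ) ≤ 0 := by
    rw [hu] at this
    simp only at this
    by_contra hcon
    push_neg at hcon
    rw [max_eq_left hcon.le] at this
    linarith
  have : (0 : ℝ) ≤ (x i : ℝ) := by linarith
  exact_mod_cast this
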